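/- arXiv:2603.08085 — 5 statements merged into one kernel-verified Lean document; each statement's English description precedes it below -/
import Mathlib

section
/- Let (G, H, σ) be a quandle triplet, Ĝ = G ⋊_σ ℤ, Ĥ = H ⋊_σ ℤ, and σ̂(g,m) = (σ(g),m). Then (Ĝ, Ĥ, σ̂) is a quandle triplet, and the map η : Q(G,H,σ) → Q(Ĝ,Ĥ,σ̂) sending Hg ↦ Ĥ(g,1) is a quandle isomorphism. -/
/-- The underlying set of the semidirect product `G ⋊_σ ℤ`, with multiplication
`(g,m)·(h,n) = (σⁿ(g) h, m + n)`. -/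
def Hat (G : Type*) [Group G] (σ : MulAut G) : Type _ := G × ℤ

namespace Hat

variable {G : Type*} [Group G] (σ : MulAut G)

/-- The element `(g, n)` of `G ⋊_σ ℤ`. -/
def mk (g : G) (n : ℤ) : Hat G σ := (g, n)

instance : Group (Hat G σ) where
  mul x y := ((σ ^ y.2) x.1 * y.1, x.2 + y.2)
  one := ((1 : G), (0 : ℤ))
  inv x := ((σ ^ (-x.2)) x.1⁻¹, -x.2)
  mul_assoc x y z := by
    show (Prod.mk ((σ ^ z.2) ((σ ^ y.2) x.1 * y.1) * z.1) (x.2 + y.2 + z.2) : G × ℤ) =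
      ((σ ^ (y.2 + z.2)) x.1 * ((σ ^ z.2) y.1 * z.1), x.2 + (y.2 + z.2))
    have : (σ ^ (y.2 + z.2)) x.1 = (σ ^ z.2) ((σ ^ y.2) x.1) := by
      rw [add_comm, zpow_add, MulAut.mul_apply]
    simp [this, map_mul, mul_assoc, add_assoc]
  one_mul x := by
    show (Prod.mk ((σ ^ x.2) 1 * x.1) (0 + x.2) : G × ℤ) = x
    simp
    rfl
  mul_one x := by
    show (Prod.mk ((σ ^ (0 : ℤ)) x.1 * 1) (x.2 + 0) : G × ℤ) = x
    simp
    rfl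
  inv_mul_cancel x := by
    show (Prod.mk ((σ ^ x.2) ((σ ^ (-x.2)) x.1⁻¹) * x.1) (-x.2 + x.2) : G × ℤ) =
      ((1 : G), (0 : ℤ))
    have : (σ ^ x.2) ((σ ^ (-x.2)) x.1⁻¹) = x.1⁻¹ := by
      rw [← MulAut.mul_apply, ← zpow_add, add_neg_cancel, zpow_zero, MulAut.one_apply]
    simp [this]

end Hat

section Aux

variable {G : Type*} [Group G]

theorem fix_zpow (σ : MulAut G) {h : G} (hh : σ h = h) (n : ℤ) : (σ ^ n) h = h := by
  induction n using Int.induction_on with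
  | zero => simp
  | succ k ih => rw [zpow_add_one, MulAut.mul_apply, hh, ih]
  | pred k ih =>
      have h' : σ⁻¹ h = h := by
        have h2 : σ⁻¹ (σ h) = h := by
          rw [← MulAut.mul_apply, inv_mul_cancel, MulAut.one_apply]
        rw [hh] at h2; exact h2
      rw [zpow_sub_one, MulAut.mul_apply]
      show (σ ^ (-(k:ℤ))) (σ⁻¹ h) = h
      rw [h', ih]

end Aux
/-- Let `(G,H,σ)` be a quandle triplet, `Ĝ = G ⋊_σ ℤ`, `Ĥ = H ⋊_σ ℤ`, and
`σ̂(g,m) = (σ(g),m)`.  Then `(Ĝ,Ĥ,σ̂)` is a quandle triplet and the map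
`η : Q(G,H,σ) → Q(Ĝ,Ĥ,σ̂)`, `Hg ↦ Ĥ(g,1)`, is a quandle isomorphism. -/
theorem hat_triplet_and_eta_iso {G : Type*} [Group G]
    (H : Subgroup G) (σ : MulAut G) (hfix : ∀ h ∈ H, σ h = h) :
    ∃ Hhat : Subgroup (Hat G σ),
      (∀ (g : G) (n : ℤ), Hat.mk σ g n ∈ Hhat ↔ g ∈ H) ∧
      ∃ σhat : Hat G σ ≃* Hat G σ,
        (∀ (g : G) (m : ℤ), σhat (Hat.mk σ g m) = Hat.mk σ (σ g) m) ∧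
        -- (Ĝ, Ĥ, σ̂) is a quandle triplet: σ̂ fixes Ĥ pointwise
        (∀ x ∈ Hhat, σhat x = x) ∧
        ∃ η : Quotient (QuotientGroup.rightRel H) →
            Quotient (QuotientGroup.rightRel Hhat),
          (∀ g : G, η (Quotient.mk _ g) = Quotient.mk _ (Hat.mk σ g 1)) ∧
          Function.Bijective η ∧
          -- η is a quandle homomorphism for the coset quandle operations
          (∀ g h : G,
            η (Quotient.mk _ (σ (g * h⁻¹) * h)) =
              Quotient.mk _ (σhat (Hat.mk σ g 1 * (Hat.mk σ h 1)⁻¹) * Hat.mk σ h 1)) := by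

  have hfixz : ∀ (n : ℤ) (h : G), h ∈ H → (σ ^ n) h = h :=
    fun n h hh => fix_zpow σ (hfix h hh) n
  set Hhat : Subgroup (Hat G σ) :=
    { carrier := {x : Hat G σ | x.1 ∈ H}
      mul_mem' := by
        intro a b ha hb
        show (σ ^ b.2) a.1 * b.1 ∈ H
        rw [hfixz _ _ ha]
        exact mul_mem ha hb
      one_mem' := one_mem H
      inv_mem' := by
        intro a ha
        show (σ ^ (-a.2)) a.1⁻¹ ∈ H
        rw [hfixz _ _ (inv_mem ha)]
        exact inv_mem ha } with hHhat
  have hmemHhat : ∀ x : Hat G σ, x ∈ Hhat ↔ x.1 ∈ H := fun x => Iff.rfl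
  have comm : ∀ (n : ℤ) (a : G), σ ((σ ^ n) a) = (σ ^ n) (σ a) := by
    intro n a
    rw [← MulAut.mul_apply, ← MulAut.mul_apply, ← zpow_one_add, ← zpow_add_one, add_comm]
  refine ⟨Hhat, fun g n => Iff.rfl, ⟨⟨fun x => (σ x.1, x.2), fun x => (σ⁻¹ x.1, x.2), ?_, ?_⟩, ?_⟩,
    fun g m => rfl, ?_, ?_⟩
  · intro x
    show ((σ⁻¹ (σ x.1), x.2) : G × ℤ) = x
    have : σ⁻¹ (σ x.1) = x.1 := by
      rw [← MulAut.mul_apply, inv_mul_cancel, MulAut.one_apply]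
    rw [this]
    rfl
  · intro x
    show ((σ (σ⁻¹ x.1), x.2) : G × ℤ) = x
    have : σ (σ⁻¹ x.1) = x.1 := by
      rw [← MulAut.mul_apply, mul_inv_cancel, MulAut.one_apply]
    rw [this]
    rfl
  · intro x y
    show ((σ ((σ ^ y.2) x.1 * y.1), x.2 + y.2) : G × ℤ)
      = ((σ ^ y.2) (σ x.1) * σ y.1, x.2 + y.2)
    rw [map_mul, comm]
  · intro x hx
    show ((σ x.1, x.2) : G × ℤ) = x
    rw [hfix _ ((hmemHhat x).mp hx)]
    rfl
  -- η
  have wd : ∀ a b : G, (QuotientGroup.rightRel H) a b →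
      (QuotientGroup.rightRel Hhat) (Hat.mk σ a 1) (Hat.mk σ b 1) := by
    intro a b hab
    rw [QuotientGroup.rightRel_apply] at hab
    rw [QuotientGroup.rightRel_apply, hmemHhat]
    show (σ ^ (-1:ℤ)) b * (σ ^ (-1:ℤ)) a⁻¹ ∈ H
    rw [← map_mul, hfixz _ _ hab]
    exact hab
  refine ⟨Quotient.map (fun g => Hat.mk σ g 1) wd, fun g => rfl, ⟨?_, ?_⟩, ?_⟩
  · -- injective
    intro x y
    refine Quotient.inductionOn₂ x y (fun a b h => ?_)
    have h2 : (QuotientGroup.rightRel Hhat) (Hat.mk σ a 1) (Hat.mk σ b 1) := Quotient.exact h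
    rw [QuotientGroup.rightRel_apply, hmemHhat] at h2
    have h3 : (σ ^ (-1:ℤ)) (b * a⁻¹) ∈ H := by
      have h4 : (σ ^ (-1:ℤ)) b * (σ ^ (-1:ℤ)) a⁻¹ ∈ H := h2
      rwa [← map_mul] at h4
    apply Quotient.sound
    show (QuotientGroup.rightRel H) a b
    rw [QuotientGroup.rightRel_apply]
    have h5 : σ ((σ ^ (-1:ℤ)) (b * a⁻¹)) = (σ ^ (-1:ℤ)) (b * a⁻¹) := hfix _ h3
    have h6 : σ ((σ ^ (-1:ℤ)) (b * a⁻¹)) = b * a⁻¹ := by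
      rw [← MulAut.mul_apply, ← zpow_one_add]
      norm_num
    rw [← h6, h5]
    exact h3
  · -- surjective
    intro x
    refine Quotient.inductionOn x (fun a => ⟨Quotient.mk _ a.1, ?_⟩)
    apply Quotient.sound
    show (QuotientGroup.rightRel Hhat) (Hat.mk σ a.1 1) a
    rw [QuotientGroup.rightRel_apply, hmemHhat]
    show (σ ^ (-1:ℤ)) a.1 * (σ ^ (-1:ℤ)) a.1⁻¹ ∈ H
    rw [← map_mul, mul_inv_cancel, map_one]
    exact one_mem H
  · -- quandle homomorphism
    intro g h
    apply congrArg (Quotient.mk _)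
    show (Hat.mk σ (σ (g * h⁻¹) * h) 1 : G × ℤ)
      = ((σ ^ (1:ℤ)) (σ ((σ ^ (-1:ℤ)) g * (σ ^ (-1:ℤ)) h⁻¹)) * h, 0 + 1)
    have e1 : σ ((σ ^ (-1:ℤ)) g * (σ ^ (-1:ℤ)) h⁻¹) = g * h⁻¹ := by
      rw [← map_mul, ← MulAut.mul_apply, ← zpow_one_add]
      norm_num
    rw [e1]
    show ((σ (g * h⁻¹) * h, (1:ℤ)) : G × ℤ) = ((σ ^ (1:ℤ)) (g * h⁻¹) * h, 0 + 1)
    rw [zpow_one]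
    norm_num
end

section
/- Let (G, H, σ) be a quandle triplet and Ĝ = G ⋊_σ ℤ. Then the map ι : Q(G,H,σ) → Conj(Ĝ), Hg ↦ (g,1)⁻¹ (e,1) (g,1) = (σ(g⁻¹)g, 1), is a quandle homomorphism, and it is injective if and only if H = Fix(σ). -/
namespace HatAux

variable {G : Type*} [Group G] (σ : MulAut G)

lemma mk_mul (g h : G) (m n : ℤ) :
    Hat.mk σ g m * Hat.mk σ h n = Hat.mk σ ((σ ^ n) g * h) (m + n) := rfl

lemma mk_inv (g : G) (n : ℤ) :
    (Hat.mk σ g n)⁻¹ = Hat.mk σ ((σ ^ (-n)) g⁻¹) (-n) := rfl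

lemma mk_injective (n : ℤ) : Function.Injective (fun g => Hat.mk σ g n) := by
  intro a b h
  exact congrArg Prod.fst h

end HatAux

/-- Let `(G,H,σ)` be a quandle triplet and `Ĝ = G ⋊_σ ℤ`.  The map
`ι : Q(G,H,σ) → Conj(Ĝ)`, `Hg ↦ (g,1)⁻¹ (e,1) (g,1) = (σ(g⁻¹)g, 1)`, is a
quandle homomorphism, and it is injective iff `H = Fix(σ)`. -/
theorem coset_quandle_embeds_in_hat {G : Type*} [Group G]
    (H : Subgroup G) (σ : MulAut G) (hfix : ∀ h ∈ H, σ h = h) :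
    ∃ ι : Quotient (QuotientGroup.rightRel H) → Hat G σ,
      (∀ g : G, ι (Quotient.mk _ g) =
        (Hat.mk σ g 1)⁻¹ * Hat.mk σ 1 1 * Hat.mk σ g 1) ∧
      (∀ g : G, ι (Quotient.mk _ g) = Hat.mk σ (σ g⁻¹ * g) 1) ∧
      (∀ g₁ g₂ : G,
        ι (Quotient.mk _ (σ (g₁ * g₂⁻¹) * g₂)) =
          (ι (Quotient.mk _ g₂))⁻¹ * ι (Quotient.mk _ g₁) * ι (Quotient.mk _ g₂)) ∧
      (Function.Injective ι ↔ (H : Set G) = {g : G | σ g = g}) := by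
  have key : ∀ g₁ g₂ : G, @Setoid.r G (QuotientGroup.rightRel H) g₁ g₂ →
      σ g₁⁻¹ * g₁ = σ g₂⁻¹ * g₂ := by
    intro g₁ g₂ h
    rw [QuotientGroup.rightRel_apply] at h
    have hσ : σ (g₂ * g₁⁻¹) = g₂ * g₁⁻¹ := hfix _ h
    have : σ g₂ * (σ g₁⁻¹ * g₁) * g₁⁻¹ = g₂ * g₁⁻¹ := by
      rw [show σ g₂ * (σ g₁⁻¹ * g₁) * g₁⁻¹ = σ (g₂ * g₁⁻¹) by
        rw [map_mul, map_inv]; group, hσ]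
    calc σ g₁⁻¹ * g₁ = (σ g₂)⁻¹ * (σ g₂ * (σ g₁⁻¹ * g₁) * g₁⁻¹) * g₁ := by group
    _ = (σ g₂)⁻¹ * (g₂ * g₁⁻¹) * g₁ := by rw [this]
    _ = σ g₂⁻¹ * g₂ := by rw [map_inv]; group
  refine ⟨Quotient.lift (fun g => Hat.mk σ (σ g⁻¹ * g) 1)
      (fun a b h => congrArg (fun x => Hat.mk σ x 1) (key a b h)), ?_, ?_, ?_, ?_⟩
  · intro g
    show Hat.mk σ (σ g⁻¹ * g) 1 = _
    rw [HatAux.mk_inv, HatAux.mk_mul, HatAux.mk_mul]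
    congr 1
    simp [-MulAut.coe_mul, ← MulAut.mul_apply, ← zpow_add, map_mul]
    exact congrArg σ (σ.apply_symm_apply g).symm
  · intro g; rfl
  · intro g₁ g₂
    show Hat.mk σ _ 1 = (Hat.mk σ _ 1)⁻¹ * Hat.mk σ _ 1 * Hat.mk σ _ 1
    rw [HatAux.mk_inv, HatAux.mk_mul, HatAux.mk_mul]
    have hz : ∀ x : G, (σ ^ (1:ℤ)) x = σ x := fun x => by rw [zpow_one]
    have hneg : ∀ x : G, σ ((σ ^ (-1:ℤ)) x) = x := fun x => by
      rw [← hz, ← MulAut.mul_apply, ← zpow_add]; norm_num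
    congr 1
    rw [hz, hz, map_mul, hneg]
    simp only [map_mul, map_inv]
    group
  · constructor
    · intro hinj
      ext x
      simp only [SetLike.mem_coe, Set.mem_setOf_eq]
      constructor
      · exact fun hx => hfix x hx
      · intro hx
        have : (Quotient.mk (QuotientGroup.rightRel H) x) = Quotient.mk _ 1 := by
          apply hinj
          show Hat.mk σ (σ x⁻¹ * x) 1 = Hat.mk σ (σ 1⁻¹ * 1) 1
          rw [map_inv, hx]; simp
        have h2 : @Setoid.r G (QuotientGroup.rightRel H) x 1 := Quotient.exact this
        rw [QuotientGroup.rightRel_apply] at h2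
        simpa using H.inv_mem h2
    · intro hH
      intro a b hab
      induction a using Quotient.inductionOn with | h g₁ => ?_
      induction b using Quotient.inductionOn with | h g₂ => ?_
      apply Quotient.sound
      show @Setoid.r G (QuotientGroup.rightRel H) g₁ g₂
      rw [QuotientGroup.rightRel_apply]
      have heq : σ g₁⁻¹ * g₁ = σ g₂⁻¹ * g₂ := HatAux.mk_injective σ 1 hab
      have : σ (g₂ * g₁⁻¹) = g₂ * g₁⁻¹ := by
        rw [map_mul]
        calc σ g₂ * σ g₁⁻¹ = σ g₂ * ((σ g₁⁻¹ * g₁) * g₁⁻¹) := by group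
        _ = σ g₂ * ((σ g₂⁻¹ * g₂) * g₁⁻¹) := by rw [heq]
        _ = g₂ * g₁⁻¹ := by rw [map_inv]; group
      have : g₂ * g₁⁻¹ ∈ (H : Set G) := by rw [hH]; exact this
      exact this
end

section
/- Let G be a group with σ(g) = q⁻¹ g q for a fixed q ∈ G. Then the map Φ : Conj(G) → Conj(G ⋊_σ ℤ), g ↦ (q⁻¹ g, 1), is an injective quandle homomorphism: Φ(h⁻¹ g h) = Φ(h)⁻¹ Φ(g) Φ(h) and Φ is injective. -/
/-- Let `G` be a group and `σ(g) = q⁻¹ g q` for a fixed `q ∈ G`.  Then the map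
`Φ : Conj(G) → Conj(G ⋊_σ ℤ)`, `g ↦ (q⁻¹ g, 1)`, is an injective quandle
homomorphism: `Φ(h⁻¹ g h) = Φ(h)⁻¹ Φ(g) Φ(h)` and `Φ` is injective. -/
theorem conj_embeds_in_hat {G : Type*} [Group G] (q : G) (σ : MulAut G)
    (hσ : ∀ g : G, σ g = q⁻¹ * g * q) :
    Function.Injective (fun g : G => Hat.mk σ (q⁻¹ * g) 1) ∧
    (∀ g h : G,
      Hat.mk σ (q⁻¹ * (h⁻¹ * g * h)) 1 =
        (Hat.mk σ (q⁻¹ * h) 1)⁻¹ * Hat.mk σ (q⁻¹ * g) 1 * Hat.mk σ (q⁻¹ * h) 1) := by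
  have hinv : ∀ g : G, σ⁻¹ g = q * g * q⁻¹ := by
    intro g
    have : σ (q * g * q⁻¹) = g := by rw [hσ]; group
    rw [← this, ← MulAut.mul_apply, inv_mul_cancel, MulAut.one_apply, this]
  constructor
  · intro a b hab
    have : q⁻¹ * a = q⁻¹ * b := congrArg Prod.fst hab
    exact mul_left_cancel this
  · intro g h
    show (Prod.mk (q⁻¹ * (h⁻¹ * g * h)) (1:ℤ) : G × ℤ) =
      ((Prod.mk ((σ ^ (1:ℤ)) ((σ ^ (1:ℤ)) ((σ ^ (-(1:ℤ))) (q⁻¹ * h)⁻¹) * (q⁻¹ * g)) * (q⁻¹ * h))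
        ((-1) + 1 + 1) : G × ℤ))
    have h1 : ∀ g : G, (σ ^ (1:ℤ)) g = q⁻¹ * g * q := by
      intro g; rw [zpow_one]; exact hσ g
    have h2 : ∀ g : G, (σ ^ (-(1:ℤ))) g = q * g * q⁻¹ := by
      intro g; rw [zpow_neg, zpow_one]; exact hinv g
    ext
    · show q⁻¹ * (h⁻¹ * g * h) = _
      simp only [h1, h2]; group
    · norm_num
end

section
/- Let G be a group, G̃ = (G × G) ⋊ ℤ/2 where the nontrivial element of ℤ/2 acts on G × G by swapping coordinates. Then the map f_B : Core(G) → Conj(G̃), g ↦ (g, g⁻¹, −1), is an injective quandle homomorphism: f_B(h g⁻¹ h) = f_B(h)⁻¹ f_B(g) f_B(h), and f_B is injective. -/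
/-- The swap action of `{±1}` on `G × G`: `1` acts trivially, `-1` swaps. -/
def sw {G : Type*} (a : ℤˣ) (p : G × G) : G × G :=
  if a = 1 then p else (p.2, p.1)

/-- The underlying set of `G̃ = (G × G) ⋊_Sw {±1}`, with multiplication
`(x, a)·(y, b) = (Sw(b)(x) · y, a b)`; explicitly
`(g₁,h₁,a)(g₂,h₂,b) = (g₁g₂, h₁h₂, ab)` if `b = 1` and `(h₁g₂, g₁h₂, ab)` if `b = -1`. -/
def Tilde (G : Type*) : Type _ := (G × G) × ℤˣ

namespace Tilde

variable {G : Type*} [Group G]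

/-- The element `(g, h, a)` of `G̃`. -/
def mk (g h : G) (a : ℤˣ) : Tilde G := ((g, h), a)

theorem sw_mul {a : ℤˣ} (p q : G × G) : sw a (p * q) = sw a p * sw a q := by
  rcases Int.units_eq_one_or a with h | h <;> simp [sw, h]

theorem sw_sw {a b : ℤˣ} (p : G × G) : sw a (sw b p) = sw (a * b) p := by
  rcases Int.units_eq_one_or a with h | h <;>
    rcases Int.units_eq_one_or b with h' | h' <;> simp [sw, h, h']

theorem sw_inv {a : ℤˣ} (p : G × G) : sw a p⁻¹ = (sw a p)⁻¹ := by
  rcases Int.units_eq_one_or a with h | h <;> simp [sw, h]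

instance : Group (Tilde G) where
  mul x y := (sw y.2 x.1 * y.1, x.2 * y.2)
  one := ((1, 1), 1)
  inv x := (sw x.2 x.1⁻¹, x.2⁻¹)
  mul_assoc x y z := by
    show (Prod.mk (sw z.2 (sw y.2 x.1 * y.1) * z.1) (x.2 * y.2 * z.2) : (G × G) × ℤˣ) =
      (sw (y.2 * z.2) x.1 * (sw z.2 y.1 * z.1), x.2 * (y.2 * z.2))
    rw [sw_mul, sw_sw, mul_comm z.2 y.2]
    simp [mul_assoc]
  one_mul x := by
    obtain ⟨p, a⟩ := x
    show (Prod.mk (sw a (1, 1) * p) ((1 : ℤˣ) * a) : (G × G) × ℤˣ) = (p, a)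
    rcases Int.units_eq_one_or a with h | h <;> simp [sw, h]
  mul_one x := by
    obtain ⟨p, a⟩ := x
    show (Prod.mk (sw (1 : ℤˣ) p * (1, 1)) (a * 1) : (G × G) × ℤˣ) = (p, a)
    simp [sw]
  inv_mul_cancel x := by
    obtain ⟨p, a⟩ := x
    show (Prod.mk (sw a (sw a p⁻¹) * p) (a⁻¹ * a) : (G × G) × ℤˣ) = ((1, 1), 1)
    rw [sw_sw]
    rcases Int.units_eq_one_or a with h | h <;> simp [sw, h] <;> rfl

end Tilde

/-- Bergman's embedding: the map `f_B : Core(G) → Conj(G̃)`, `g ↦ (g, g⁻¹, −1)`,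
is an injective quandle homomorphism: `f_B(h g⁻¹ h) = f_B(h)⁻¹ f_B(g) f_B(h)`,
and `f_B` is injective. -/
theorem bergman_embedding {G : Type*} [Group G] :
    (∀ g h : G,
      Tilde.mk (h * g⁻¹ * h) (h * g⁻¹ * h)⁻¹ (-1) =
        (Tilde.mk h h⁻¹ (-1))⁻¹ * Tilde.mk g g⁻¹ (-1) * Tilde.mk h h⁻¹ (-1)) ∧
    Function.Injective (fun g : G => Tilde.mk g g⁻¹ (-1)) := by
  constructor
  · intro g h
    show (Prod.mk (h * g⁻¹ * h, (h * g⁻¹ * h)⁻¹) (-1 : ℤˣ) : (G × G) × ℤˣ) = _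
    show _ = (Prod.mk (sw (-1 : ℤˣ) ((sw (-1 : ℤˣ) (sw (-1 : ℤˣ) (h, h⁻¹)⁻¹)) * (g, g⁻¹)) * (h, h⁻¹)) ((-1 : ℤˣ)⁻¹ * -1 * -1))
    simp [sw, mul_assoc]
  · intro g h e
    have := congrArg (fun x : (G × G) × ℤˣ => x.1.1) e
    exact this
end

section
/- Let G be a group and G̃ = (G×G) ⋊_Sw {±1} with the swap action. Let Δ = {(g,g,a) : g ∈ G, a ∈ {±1}} and σ̃(g,h,a) := (h,g,a). Then Δ is a subgroup of G̃, σ̃ is an automorphism of G̃ with Fix(σ̃) = Δ, and the map G → Δ\G̃, g ↦ Δ(g, e, 1), is a quandle isomorphism from Core(G) onto the coset quandle Q(G̃, Δ, σ̃). -/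
namespace Tilde

variable {G : Type*} [Group G]

theorem mul_def (x y : Tilde G) :
    x * y = ((sw y.2 x.1 * y.1, x.2 * y.2) : (G × G) × ℤˣ) := rfl

theorem inv_def (x : Tilde G) :
    x⁻¹ = ((sw x.2 x.1⁻¹, x.2⁻¹) : (G × G) × ℤˣ) := rfl

theorem sw_diag {a : ℤˣ} {p : G × G} (h : p.1 = p.2) : sw a p = p := by
  rcases Int.units_eq_one_or a with h' | h' <;> simp [sw, h'] <;>
    exact Prod.ext h.symm h

theorem sw_swap {a : ℤˣ} (p : G × G) : (sw a p).swap = sw a p.swap := by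
  rcases Int.units_eq_one_or a with h | h <;> simp [sw, h]

/-- The diagonal subgroup `Δ`. -/
def Δ (G : Type*) [Group G] : Subgroup (Tilde G) where
  carrier := {x | x.1.1 = x.1.2}
  mul_mem' := by
    intro x y hx hy
    show (x * y).1.1 = (x * y).1.2
    rw [mul_def]
    simp only [sw_diag hx]
    show x.1.1 * y.1.1 = x.1.2 * y.1.2
    rw [hx, hy]
  one_mem' := rfl
  inv_mem' := by
    intro x hx
    have hx' : x.1.1 = x.1.2 := hx
    show x⁻¹.1.1 = x⁻¹.1.2
    rw [inv_def]
    have : (x.1⁻¹ : G × G).1 = (x.1⁻¹).2 := by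
      simp [Prod.fst_inv, Prod.snd_inv, hx']
    simp [sw_diag this, this]

/-- The swap automorphism `σ̃`. -/
def σt (G : Type*) [Group G] : Tilde G ≃* Tilde G where
  toFun x := ((x.1.swap, x.2) : (G × G) × ℤˣ)
  invFun x := ((x.1.swap, x.2) : (G × G) × ℤˣ)
  left_inv x := by simp; rfl
  right_inv x := by simp; rfl
  map_mul' x y := by
    refine Prod.ext ?_ rfl
    show (sw y.2 x.1 * y.1).swap = sw y.2 x.1.swap * y.1.swap
    rw [show (sw y.2 x.1 * y.1).swap = (sw y.2 x.1).swap * y.1.swap from rfl, sw_swap]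

end Tilde

/-- Let `G̃ = (G×G) ⋊_Sw {±1}`, `Δ = {(g,g,a)}` and `σ̃(g,h,a) = (h,g,a)`.
Then `Δ` is a subgroup of `G̃`, `σ̃` is an automorphism of `G̃` with
`Fix(σ̃) = Δ`, and `g ↦ Δ(g,e,1)` is a quandle isomorphism from `Core(G)`
onto the coset quandle `Q(G̃, Δ, σ̃)`. -/
theorem core_iso_coset_quandle {G : Type*} [Group G] :
    ∃ Δ : Subgroup (Tilde G),
      (∀ (g h : G) (a : ℤˣ), Tilde.mk g h a ∈ Δ ↔ g = h) ∧
      ∃ σt : Tilde G ≃* Tilde G,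
        (∀ (g h : G) (a : ℤˣ), σt (Tilde.mk g h a) = Tilde.mk h g a) ∧
        (∀ x : Tilde G, σt x = x ↔ x ∈ Δ) ∧
        ∃ η : G → Quotient (QuotientGroup.rightRel Δ),
          (∀ g : G, η g = Quotient.mk _ (Tilde.mk g 1 1)) ∧
          Function.Bijective η ∧
          (∀ g h : G,
            η (h * g⁻¹ * h) =
              Quotient.mk _ (σt (Tilde.mk g 1 1 * (Tilde.mk h 1 1)⁻¹) * Tilde.mk h 1 1)) := by
  refine ⟨Tilde.Δ G, fun g h a => Iff.rfl, Tilde.σt G, fun g h a => rfl, ?_, ?_⟩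
  · intro x
    constructor
    · intro hx
      have h1 : x.1.swap = x.1 := congrArg Prod.fst hx
      exact (congrArg Prod.fst h1).symm
    · intro hx
      have h1 : x.1.swap = x.1 := Prod.ext hx.symm hx
      exact Prod.ext h1 rfl
  · refine ⟨fun g => Quotient.mk _ (Tilde.mk g 1 1), fun g => rfl, ⟨?_, ?_⟩, ?_⟩
    · intro g g' hgg'
      have h2 := QuotientGroup.rightRel_apply.mp (Quotient.exact hgg')
      have h3 : Tilde.mk g' 1 1 * (Tilde.mk g 1 1)⁻¹ = Tilde.mk (g' * g⁻¹) 1 1 := by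
        rw [Tilde.mul_def, Tilde.inv_def]
        simp [Tilde.mk, sw]
        rfl
      rw [h3] at h2
      have h4 : g' * g⁻¹ = 1 := h2
      exact (mul_inv_eq_one.mp h4).symm
    · intro q
      induction q using Quotient.ind with
      | _ x =>
        refine ⟨x.1.2⁻¹ * x.1.1, Quotient.sound (QuotientGroup.rightRel_apply.mpr ?_)⟩
        show (x * (Tilde.mk (x.1.2⁻¹ * x.1.1) 1 1)⁻¹).1.1 =
          (x * (Tilde.mk (x.1.2⁻¹ * x.1.1) 1 1)⁻¹).1.2
        rw [Tilde.mul_def, Tilde.inv_def]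
        simp [Tilde.mk, sw]
    · intro g h
      refine Quotient.sound (QuotientGroup.rightRel_apply.mpr ?_)
      set y := Tilde.σt G (Tilde.mk g 1 1 * (Tilde.mk h 1 1)⁻¹) * Tilde.mk h 1 1 with hy
      have hy' : y = Tilde.mk h (g * h⁻¹) 1 := by
        rw [hy, Tilde.inv_def, Tilde.mul_def]
        show (((_ : Tilde G).1.swap, _) : (G × G) × ℤˣ) * _ = _
        erw [Tilde.mul_def]
        simp [Tilde.mk, sw]
      show (y * (Tilde.mk (h * g⁻¹ * h) 1 1)⁻¹).1.1 =
        (y * (Tilde.mk (h * g⁻¹ * h) 1 1)⁻¹).1.2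
      rw [hy', Tilde.mul_def, Tilde.inv_def]
      simp [Tilde.mk, sw]
end
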